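/- arXiv:math-ph/9912020 — 3 statements merged into one kernel-verified Lean document; each statement's English description precedes it below -/
import Mathlib

section
/- For every integer m ≥ 0, the ratio x ↦ V_{m+1}(x)/V_m(x) is increasing on (0, ∞). -/
open MeasureTheory Real Set

/-- The one-dimensional regularized Coulomb potential `V_m(x)` for integer `m ≥ 0`. -/
noncomputable def V (m : ℕ) (x : ℝ) : ℝ :=
  (1 / (Nat.factorial m : ℝ)) *
    ∫ u in Set.Ioi (0:ℝ), u ^ m * Real.exp (-u) / Real.sqrt (x ^ 2 + u)

namespace VRatioAux

/-- The integrand. -/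
noncomputable def f (k : ℕ) (x u : ℝ) : ℝ := u ^ k * Real.exp (-u) / Real.sqrt (x ^ 2 + u)

lemma f_integrable (k : ℕ) {x : ℝ} (hx : 0 < x) : IntegrableOn (f k x) (Ioi 0) := by
  have hmaj : IntegrableOn (fun u : ℝ => x⁻¹ * (Real.exp (-u) * u ^ k)) (Ioi 0) := by
    have h := (Real.GammaIntegral_convergent (s := (k + 1 : ℝ)) (by positivity)).const_mul x⁻¹
    have he : ∀ u : ℝ, x⁻¹ * (Real.exp (-u) * u ^ ((k + 1 : ℝ) - 1))
        = x⁻¹ * (Real.exp (-u) * u ^ (k : ℝ)) := by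
      intro u; norm_num
    simpa [he, Real.rpow_natCast, IntegrableOn] using h
  refine hmaj.mono' ?_ ?_
  · apply (ContinuousOn.div ?_ ?_ ?_).aestronglyMeasurable measurableSet_Ioi
    · exact ((continuous_pow k).mul (Real.continuous_exp.comp continuous_neg)).continuousOn
    · exact (Real.continuous_sqrt.comp (continuous_const.add continuous_id)).continuousOn
    · intro u hu
      have : (0:ℝ) < x ^ 2 + u := by have := hu.out; positivity
      exact (Real.sqrt_pos.mpr this).ne'
  · filter_upwards [ae_restrict_mem measurableSet_Ioi] with u hu
    have hu0 : (0:ℝ) < u := hu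
    have hs : x ≤ Real.sqrt (x ^ 2 + u) := by
      nlinarith [Real.sq_sqrt (show (0:ℝ) ≤ x ^ 2 + u by positivity),
        Real.sqrt_nonneg (x ^ 2 + u)]
    have hnum : (0:ℝ) ≤ u ^ k * Real.exp (-u) :=
      mul_nonneg (pow_nonneg hu0.le _) (Real.exp_nonneg _)
    simp only [f]
    rw [Real.norm_eq_abs, abs_of_nonneg (div_nonneg hnum (Real.sqrt_nonneg _))]
    calc u ^ k * Real.exp (-u) / Real.sqrt (x ^ 2 + u)
        ≤ u ^ k * Real.exp (-u) / x := div_le_div_of_nonneg_left hnum hx hs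
      _ = x⁻¹ * (Real.exp (-u) * u ^ k) := by ring

lemma f_pos (k : ℕ) {x : ℝ} (hx : 0 < x) : 0 < ∫ u in Ioi (0:ℝ), f k x u := by
  have hnn : 0 ≤ᶠ[ae (volume.restrict (Ioi (0:ℝ)))] f k x := by
    filter_upwards [ae_restrict_mem measurableSet_Ioi] with u hu
    have hu0 : (0:ℝ) < u := hu
    exact div_nonneg (mul_nonneg (pow_nonneg hu0.le _) (Real.exp_nonneg _)) (Real.sqrt_nonneg _)
  rw [setIntegral_pos_iff_support_of_nonneg_ae hnn (f_integrable k hx)]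
  have hsub : Ioi (0:ℝ) ⊆ Function.support (f k x) ∩ Ioi 0 := by
    intro u hu
    have hu0 : (0:ℝ) < u := hu
    have hden : (0:ℝ) < Real.sqrt (x ^ 2 + u) := Real.sqrt_pos.mpr (by positivity)
    have : 0 < f k x u :=
      div_pos (mul_pos (pow_pos hu0 _) (Real.exp_pos _)) hden
    exact ⟨this.ne', hu⟩
  refine lt_of_lt_of_le (b := volume (Ioi (0:ℝ))) ?_ (measure_mono hsub)
  rw [Real.volume_Ioi]
  exact ENNReal.zero_lt_top

lemma aux (P u v A B : ℝ) (hP : 0 ≤ P) (hA : 0 < A) (hB : 0 < B)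
    (h : (u - v) * (B - A) ≤ 0) :
    P * u / A + P * v / B ≤ P * v / A + P * u / B := by
  rw [div_add_div _ _ hA.ne' hB.ne', div_add_div _ _ hA.ne' hB.ne',
    div_le_div_iff₀ (by positivity) (by positivity)]
  nlinarith [mul_nonneg (mul_nonneg hP (mul_pos hA hB).le) (neg_nonneg.mpr h)]

lemma pointwise_core (m : ℕ) (u v eu ev a b c d : ℝ) (heu : 0 ≤ eu) (hev : 0 ≤ ev)
    (hu : 0 < u) (hv : 0 < v)
    (ha : 0 < a) (hb : 0 < b) (hc : 0 < c) (hd : 0 < d)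
    (hkey : (u - v) * (d * c - a * b) ≤ 0) :
    u ^ (m+1) * eu / a * (v ^ m * ev / b) + u ^ m * eu / d * (v ^ (m+1) * ev / c) ≤
    u ^ m * eu / a * (v ^ (m+1) * ev / b) + u ^ (m+1) * eu / d * (v ^ m * ev / c) := by
  have hP : (0:ℝ) ≤ u ^ m * v ^ m * (eu * ev) := by positivity
  have main := aux (u ^ m * v ^ m * (eu * ev)) u v (a * b) (d * c) hP
    (mul_pos ha hb) (mul_pos hd hc) hkey
  have e1 : u ^ (m+1) * eu / a * (v ^ m * ev / b) + u ^ m * eu / d * (v ^ (m+1) * ev / c)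
      = u ^ m * v ^ m * (eu * ev) * u / (a * b) + u ^ m * v ^ m * (eu * ev) * v / (d * c) := by
    rw [pow_succ, pow_succ]
    field_simp
  have e2 : u ^ m * eu / a * (v ^ (m+1) * ev / b) + u ^ (m+1) * eu / d * (v ^ m * ev / c)
      = u ^ m * v ^ m * (eu * ev) * v / (a * b) + u ^ m * v ^ m * (eu * ev) * u / (d * c) := by
    rw [pow_succ, pow_succ]
    field_simp
  rw [e1, e2]
  exact main

lemma pointwise (m : ℕ) {x y u v : ℝ} (hx : 0 < x) (hxy : x ≤ y) (hu : 0 < u) (hv : 0 < v) :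
    f (m+1) x u * f m y v + f m y u * f (m+1) x v ≤
    f m x u * f (m+1) y v + f (m+1) y u * f m x v := by
  have hy : 0 < y := hx.trans_le hxy
  have hau : (0:ℝ) < x ^ 2 + u := by positivity
  have hbv : (0:ℝ) < y ^ 2 + v := by positivity
  have hcv : (0:ℝ) < x ^ 2 + v := by positivity
  have hdu : (0:ℝ) < y ^ 2 + u := by positivity
  have ha : 0 < Real.sqrt (x ^ 2 + u) := Real.sqrt_pos.mpr hau
  have hb : 0 < Real.sqrt (y ^ 2 + v) := Real.sqrt_pos.mpr hbv
  have hc : 0 < Real.sqrt (x ^ 2 + v) := Real.sqrt_pos.mpr hcv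
  have hd : 0 < Real.sqrt (y ^ 2 + u) := Real.sqrt_pos.mpr hdu
  have ha2 : Real.sqrt (x ^ 2 + u) ^ 2 = x ^ 2 + u := Real.sq_sqrt hau.le
  have hb2 : Real.sqrt (y ^ 2 + v) ^ 2 = y ^ 2 + v := Real.sq_sqrt hbv.le
  have hc2 : Real.sqrt (x ^ 2 + v) ^ 2 = x ^ 2 + v := Real.sq_sqrt hcv.le
  have hd2 : Real.sqrt (y ^ 2 + u) ^ 2 = y ^ 2 + u := Real.sq_sqrt hdu.le
  have hkey : (u - v) * (Real.sqrt (y ^ 2 + u) * Real.sqrt (x ^ 2 + v)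
      - Real.sqrt (x ^ 2 + u) * Real.sqrt (y ^ 2 + v)) ≤ 0 := by
    set a := Real.sqrt (x ^ 2 + u)
    set b := Real.sqrt (y ^ 2 + v)
    set c := Real.sqrt (x ^ 2 + v)
    set d := Real.sqrt (y ^ 2 + u)
    have h1 : (d * c) ^ 2 - (a * b) ^ 2 = (u - v) * (x ^ 2 - y ^ 2) := by
      rw [mul_pow, mul_pow, ha2, hb2, hc2, hd2]; ring
    have h2 : ((u - v) * (d * c - a * b)) * (d * c + a * b)
        = (u - v) ^ 2 * (x ^ 2 - y ^ 2) := by linear_combination (u - v) * h1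
    have hxy2 : x ^ 2 - y ^ 2 ≤ 0 := by nlinarith
    have h3 : (u - v) ^ 2 * (x ^ 2 - y ^ 2) ≤ 0 :=
      mul_nonpos_of_nonneg_of_nonpos (sq_nonneg _) hxy2
    have hsum : 0 < d * c + a * b := by positivity
    by_contra hcon
    push_neg at hcon
    nlinarith [mul_pos hcon hsum]
  simp only [f]
  exact pointwise_core m u v (Real.exp (-u)) (Real.exp (-v)) _ _ _ _
    (Real.exp_nonneg _) (Real.exp_nonneg _) hu hv ha hb hc hd hkey

lemma key (m : ℕ) {x y : ℝ} (hx : 0 < x) (hxy : x ≤ y) :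
    (∫ u in Ioi (0:ℝ), f (m+1) x u) * (∫ u in Ioi (0:ℝ), f m y u) ≤
    (∫ u in Ioi (0:ℝ), f m x u) * (∫ u in Ioi (0:ℝ), f (m+1) y u) := by
  have hy : 0 < y := hx.trans_le hxy
  set μ := volume.restrict (Ioi (0:ℝ)) with hμ
  have hfx1 : Integrable (f (m+1) x) μ := f_integrable _ hx
  have hfx0 : Integrable (f m x) μ := f_integrable _ hx
  have hfy1 : Integrable (f (m+1) y) μ := f_integrable _ hy
  have hfy0 : Integrable (f m y) μ := f_integrable _ hy
  have hG : Integrable (fun z : ℝ × ℝ => f (m+1) x z.1 * f m y z.2) (μ.prod μ) :=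
    hfx1.mul_prod hfy0
  have hG' : Integrable (fun z : ℝ × ℝ => f m y z.1 * f (m+1) x z.2) (μ.prod μ) :=
    hfy0.mul_prod hfx1
  have hH : Integrable (fun z : ℝ × ℝ => f m x z.1 * f (m+1) y z.2) (μ.prod μ) :=
    hfx0.mul_prod hfy1
  have hH' : Integrable (fun z : ℝ × ℝ => f (m+1) y z.1 * f m x z.2) (μ.prod μ) :=
    hfy1.mul_prod hfx0
  have hmem : ∀ᵐ z ∂(μ.prod μ), z ∈ (Ioi (0:ℝ)) ×ˢ (Ioi (0:ℝ)) := by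
    rw [hμ, Measure.prod_restrict]
    exact ae_restrict_mem (measurableSet_Ioi.prod measurableSet_Ioi)
  have hmono : ∫ z : ℝ × ℝ, (f (m+1) x z.1 * f m y z.2 + f m y z.1 * f (m+1) x z.2) ∂(μ.prod μ)
      ≤ ∫ z : ℝ × ℝ, (f m x z.1 * f (m+1) y z.2 + f (m+1) y z.1 * f m x z.2) ∂(μ.prod μ) := by
    refine integral_mono_ae (hG.add hG') (hH.add hH') ?_
    filter_upwards [hmem] with z hz
    exact pointwise m hx hxy hz.1 hz.2
  rw [integral_add hG hG', integral_add hH hH',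
    integral_prod_mul (f (m+1) x) (f m y), integral_prod_mul (f m y) (f (m+1) x),
    integral_prod_mul (f m x) (f (m+1) y), integral_prod_mul (f (m+1) y) (f m x)] at hmono
  nlinarith [hmono]

end VRatioAux

theorem V_ratio_monotone (m : ℕ) :
    MonotoneOn (fun x => V (m + 1) x / V m x) (Set.Ioi 0) := by
  intro x hx y hy hxy
  have hx0 : (0:ℝ) < x := hx
  have hy0 : (0:ℝ) < y := hy
  have hVx : 0 < V m x := mul_pos (by positivity) (VRatioAux.f_pos m hx0)
  have hVy : 0 < V m y := mul_pos (by positivity) (VRatioAux.f_pos m hy0)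
  simp only
  rw [div_le_div_iff₀ hVx hVy]
  have hkey := VRatioAux.key m hx0 hxy
  have c1 : (0:ℝ) < 1 / (Nat.factorial (m+1) : ℝ) := by positivity
  have c2 : (0:ℝ) < 1 / (Nat.factorial m : ℝ) := by positivity
  show (1 / (Nat.factorial (m+1) : ℝ)) * _ * ((1 / (Nat.factorial m : ℝ)) * _) ≤ _
  calc (1 / (Nat.factorial (m+1) : ℝ)) * (∫ u in Ioi (0:ℝ), VRatioAux.f (m+1) x u)
        * ((1 / (Nat.factorial m : ℝ)) * (∫ u in Ioi (0:ℝ), VRatioAux.f m y u))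
      = (1 / (Nat.factorial (m+1) : ℝ)) * (1 / (Nat.factorial m : ℝ))
        * ((∫ u in Ioi (0:ℝ), VRatioAux.f (m+1) x u) * (∫ u in Ioi (0:ℝ), VRatioAux.f m y u)) := by
        ring
    _ ≤ (1 / (Nat.factorial (m+1) : ℝ)) * (1 / (Nat.factorial m : ℝ))
        * ((∫ u in Ioi (0:ℝ), VRatioAux.f m x u) * (∫ u in Ioi (0:ℝ), VRatioAux.f (m+1) y u)) := by
        exact mul_le_mul_of_nonneg_left hkey (by positivity)
    _ = (1 / (Nat.factorial (m+1) : ℝ)) * (∫ u in Ioi (0:ℝ), VRatioAux.f (m+1) y u)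
        * ((1 / (Nat.factorial m : ℝ)) * (∫ u in Ioi (0:ℝ), VRatioAux.f m x u)) := by
        ring
end

section
/- For every integer m ≥ 0 and all reals x > 0, y > 0, the subadditivity inequality 1/V_m(x + y) ≤ 1/V_m(x) + 1/V_m(y) holds. -/
open MeasureTheory Real Set

lemma V_integrand_integrableOn (m : ℕ) {x : ℝ} (hx : 0 < x) :
    IntegrableOn (fun u : ℝ => u ^ m * Real.exp (-u) / Real.sqrt (x ^ 2 + u))
      (Set.Ioi (0:ℝ)) := by
  have hΓ : IntegrableOn (fun u : ℝ => Real.exp (-u) * u ^ (((m : ℝ) + 1) - 1))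
      (Set.Ioi (0:ℝ)) := Real.GammaIntegral_convergent (by positivity)
  have hmeas : Measurable fun u : ℝ => u ^ m * Real.exp (-u) / Real.sqrt (x ^ 2 + u) := by
    exact ((measurable_id.pow_const m).mul (measurable_id.neg.exp)).div
      ((measurable_const.add measurable_id).sqrt)
  refine Integrable.mono' (hΓ.const_mul (1 / x)) hmeas.aestronglyMeasurable ?_
  filter_upwards [self_mem_ae_restrict measurableSet_Ioi] with u hu
  have hu0 : (0:ℝ) < u := hu
  have hs : x ≤ Real.sqrt (x ^ 2 + u) := by
    have h := Real.sqrt_le_sqrt (show x ^ 2 ≤ x ^ 2 + u by linarith)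
    rwa [Real.sqrt_sq hx.le] at h
  have hspos : (0:ℝ) < Real.sqrt (x ^ 2 + u) := lt_of_lt_of_le hx hs
  have hnum : (0:ℝ) ≤ u ^ m * Real.exp (-u) := by positivity
  rw [Real.norm_eq_abs, abs_of_nonneg (by positivity)]
  have hrpow : u ^ (((m : ℝ) + 1) - 1) = u ^ m := by
    rw [show ((m : ℝ) + 1) - 1 = (m : ℝ) by ring, Real.rpow_natCast]
  rw [hrpow]
  rw [div_le_iff₀ hspos]
  calc u ^ m * Real.exp (-u)
      = (1 / x * (Real.exp (-u) * u ^ m)) * x := by field_simp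
    _ ≤ (1 / x * (Real.exp (-u) * u ^ m)) * Real.sqrt (x ^ 2 + u) := by
        apply mul_le_mul_of_nonneg_left hs (by positivity)

lemma V_pos (m : ℕ) {x : ℝ} (hx : 0 < x) : 0 < V m x := by
  unfold V
  apply mul_pos (by positivity)
  rw [setIntegral_pos_iff_support_of_nonneg_ae]
  · refine lt_of_lt_of_le ?_ (measure_mono (s := Set.Ioi (0:ℝ)) ?_)
    · simp [Real.volume_Ioi]
    · intro u hu
      have hu0 : (0:ℝ) < u := hu
      have hspos : (0:ℝ) < Real.sqrt (x ^ 2 + u) := Real.sqrt_pos.2 (by positivity)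
      refine ⟨?_, hu⟩
      simp only [Function.mem_support]
      positivity
  · filter_upwards [self_mem_ae_restrict measurableSet_Ioi] with u hu
    have hu0 : (0:ℝ) < u := hu
    positivity
  · exact V_integrand_integrableOn m hx

lemma mul_V_mono (m : ℕ) {a b : ℝ} (ha : 0 < a) (hab : a ≤ b) :
    a * V m a ≤ b * V m b := by
  have hb : 0 < b := lt_of_lt_of_le ha hab
  unfold V
  rw [show a * ((1 / (Nat.factorial m : ℝ)) * _) = (1 / (Nat.factorial m : ℝ)) *
    (a * ∫ u in Set.Ioi (0:ℝ), u ^ m * Real.exp (-u) / Real.sqrt (a ^ 2 + u)) by ring]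
  rw [show b * ((1 / (Nat.factorial m : ℝ)) * _) = (1 / (Nat.factorial m : ℝ)) *
    (b * ∫ u in Set.Ioi (0:ℝ), u ^ m * Real.exp (-u) / Real.sqrt (b ^ 2 + u)) by ring]
  apply mul_le_mul_of_nonneg_left _ (by positivity)
  rw [← MeasureTheory.integral_const_mul, ← MeasureTheory.integral_const_mul]
  apply setIntegral_mono_on ((V_integrand_integrableOn m ha).const_mul a)
    ((V_integrand_integrableOn m hb).const_mul b) measurableSet_Ioi
  intro u hu
  have hu0 : (0:ℝ) < u := hu
  have hA : (0:ℝ) < Real.sqrt (a ^ 2 + u) := Real.sqrt_pos.2 (by positivity)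
  have hB : (0:ℝ) < Real.sqrt (b ^ 2 + u) := Real.sqrt_pos.2 (by positivity)
  have key : a / Real.sqrt (a ^ 2 + u) ≤ b / Real.sqrt (b ^ 2 + u) := by
    rw [div_le_div_iff₀ hA hB]
    have h1 : a * Real.sqrt (b ^ 2 + u) = Real.sqrt (a ^ 2 * (b ^ 2 + u)) := by
      rw [Real.sqrt_mul (by positivity), Real.sqrt_sq ha.le]
    have h2 : b * Real.sqrt (a ^ 2 + u) = Real.sqrt (b ^ 2 * (a ^ 2 + u)) := by
      rw [Real.sqrt_mul (by positivity), Real.sqrt_sq hb.le]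
    rw [h1, h2]
    apply Real.sqrt_le_sqrt
    nlinarith [mul_le_mul hab hab ha.le hb.le, hu0.le]
  have hc : (0:ℝ) ≤ u ^ m * Real.exp (-u) := by positivity
  calc a * (u ^ m * Real.exp (-u) / Real.sqrt (a ^ 2 + u))
      = (u ^ m * Real.exp (-u)) * (a / Real.sqrt (a ^ 2 + u)) := by ring
    _ ≤ (u ^ m * Real.exp (-u)) * (b / Real.sqrt (b ^ 2 + u)) :=
        mul_le_mul_of_nonneg_left key hc
    _ = b * (u ^ m * Real.exp (-u) / Real.sqrt (b ^ 2 + u)) := by ring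

theorem inv_V_subadditive (m : ℕ) (x y : ℝ) (hx : 0 < x) (hy : 0 < y) :
    1 / V m (x + y) ≤ 1 / V m x + 1 / V m y := by
  have hA := V_pos m hx
  have hB := V_pos m hy
  have hC := V_pos m (show (0:ℝ) < x + y by linarith)
  have h1 : x * V m x ≤ (x + y) * V m (x + y) := mul_V_mono m hx (by linarith)
  have h2 : y * V m y ≤ (x + y) * V m (x + y) := mul_V_mono m hy (by linarith)
  rw [div_add_div _ _ hA.ne' hB.ne', div_le_div_iff₀ hC (by positivity)]
  nlinarith [mul_le_mul_of_nonneg_right h1 hB.le, mul_le_mul_of_nonneg_right h2 hA.le,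
    mul_pos hA hB, mul_pos hx hy]
end

section
/- For every positive integer N, the averaged potential V_av^N(x) = (1/N) Σ_{m=0}^{N−1} V_m(x) satisfies V_av^N(x) = 2 V_N(x) − (2x²/N) [ 1/x − V_{N−1}(x) ] for all x > 0; moreover V_av^N is convex on (0, ∞) and lim_{x→0⁺} (d/dx) V_av^N(x) = −2/N (so V_av^N has a cusp at x = 0). -/
open MeasureTheory Real Set Filter Topology Finset

/-- The averaged potential of the Slater model,
`V_av^N(x) = (1/N) ∑_{m=0}^{N-1} V_m(x)`. -/
noncomputable def Vav (N : ℕ) (x : ℝ) : ℝ :=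
  (1 / (N : ℝ)) * ∑ m ∈ Finset.range N, V m x

set_option linter.unreachableTactic false
set_option linter.unusedTactic false

lemma intPow (k : ℕ) : IntegrableOn (fun u : ℝ => u ^ k * Real.exp (-u)) (Ioi 0) := by
  have h := Real.GammaIntegral_convergent (s := (k : ℝ) + 1) (by positivity)
  apply h.congr_fun ?_ measurableSet_Ioi
  intro u hu
  simp only
  rw [show ((k : ℝ) + 1 - 1) = (k : ℝ) by ring, Real.rpow_natCast, mul_comm]

lemma intPowHalf (k : ℕ) : IntegrableOn (fun u : ℝ => u ^ k * Real.exp (-u) / Real.sqrt u) (Ioi 0) := by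
  have h := Real.GammaIntegral_convergent (s := (k : ℝ) + 1/2) (by positivity)
  apply h.congr_fun ?_ measurableSet_Ioi
  intro u hu
  simp only
  rw [show ((k : ℝ) + 1/2 - 1) = (k : ℝ) + (-(1/2)) by ring, Real.rpow_add hu,
    Real.rpow_natCast, Real.rpow_neg hu.le, Real.sqrt_eq_rpow]
  ring

lemma sqrt_convex_ineq {u x y a b : ℝ} (hu : 0 ≤ u) (ha : 0 ≤ a) (hb : 0 ≤ b) (hab : a + b = 1) :
    Real.sqrt ((a*x+b*y)^2 + u) ≤ a * Real.sqrt (x^2+u) + b * Real.sqrt (y^2+u) := by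
  set s := Real.sqrt (x^2+u) with hsdef
  set t := Real.sqrt (y^2+u) with htdef
  have hs0 : 0 ≤ s := Real.sqrt_nonneg _
  have ht0 : 0 ≤ t := Real.sqrt_nonneg _
  have hs2 : s^2 = x^2+u := Real.sq_sqrt (by positivity)
  have ht2 : t^2 = y^2+u := Real.sq_sqrt (by positivity)
  have hst : x*y + u ≤ s*t := by
    have h1 : s*t = Real.sqrt ((x^2+u)*(y^2+u)) := (Real.sqrt_mul (by positivity) _).symm
    have h2 : (x*y+u)^2 ≤ (x^2+u)*(y^2+u) := by nlinarith [sq_nonneg (x-y)]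
    calc x*y+u ≤ |x*y+u| := le_abs_self _
      _ = Real.sqrt ((x*y+u)^2) := (Real.sqrt_sq_eq_abs _).symm
      _ ≤ Real.sqrt ((x^2+u)*(y^2+u)) := Real.sqrt_le_sqrt h2
      _ = s*t := h1.symm
  calc Real.sqrt ((a*x+b*y)^2+u)
      ≤ Real.sqrt ((a*s+b*t)^2) := by
        apply Real.sqrt_le_sqrt
        have habsq : (a+b)^2 = 1 := by rw [hab]; norm_num
        have hu2 : a^2*u + 2*(a*b)*u + b^2*u = u := by linear_combination u * habsq
        have e1 : a^2*s^2 = a^2*(x^2+u) := by rw [hs2]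
        have e2 : b^2*t^2 = b^2*(y^2+u) := by rw [ht2]
        have e3 : a*b*(x*y+u) ≤ a*b*(s*t) := mul_le_mul_of_nonneg_left hst (mul_nonneg ha hb)
        nlinarith [e1, e2, e3, hu2]
    _ = a*s+b*t := Real.sqrt_sq (by positivity)

lemma sqrt_le_lin {x u : ℝ} (hu : 0 ≤ u) : Real.sqrt (x^2+u) ≤ |x| + 1 + u := by
  have h1 : Real.sqrt (x^2+u) ≤ Real.sqrt ((|x|+1+u)^2) := by
    apply Real.sqrt_le_sqrt
    have : x^2 = |x|^2 := (sq_abs x).symm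
    nlinarith [abs_nonneg x]
  calc Real.sqrt (x^2+u) ≤ Real.sqrt ((|x|+1+u)^2) := h1
    _ = |x|+1+u := Real.sqrt_sq (by positivity)

lemma intInv (k : ℕ) {x : ℝ} (hx : 0 < x) :
    IntegrableOn (fun u : ℝ => u ^ k * Real.exp (-u) / Real.sqrt (x^2+u)) (Ioi 0) := by
  apply Integrable.mono' ((intPow k).div_const x)
  · apply ContinuousOn.aestronglyMeasurable ?_ measurableSet_Ioi
    apply ContinuousOn.div
    · exact ((continuous_pow k).mul (continuous_neg.rexp)).continuousOn
    · exact (Real.continuous_sqrt.comp (continuous_const.add continuous_id)).continuousOn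
    · intro u hu
      have : (0:ℝ) < x^2+u := by have := hu.out; positivity
      exact (Real.sqrt_pos.mpr this).ne'
  · rw [ae_restrict_iff' measurableSet_Ioi]
    filter_upwards with u hu
    have hu0 : (0:ℝ) < u := hu
    have hs : x ≤ Real.sqrt (x^2+u) := Real.le_sqrt_of_sq_le (by linarith)
    rw [Real.norm_eq_abs, abs_of_nonneg (by positivity)]
    gcongr
    all_goals first | exact hx | exact hs | positivity

lemma intSqrt (k : ℕ) (x : ℝ) :
    IntegrableOn (fun u : ℝ => u ^ k * Real.exp (-u) * Real.sqrt (x^2+u)) (Ioi 0) := by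
  apply Integrable.mono' (((intPow k).mul_const (|x|+1)).add (intPow (k+1)))
  · apply Continuous.aestronglyMeasurable
    exact ((continuous_pow k).mul (continuous_neg.rexp)).mul
      (Real.continuous_sqrt.comp (continuous_const.add continuous_id))
  · rw [ae_restrict_iff' measurableSet_Ioi]
    filter_upwards with u hu
    have hu0 : (0:ℝ) < u := hu
    have h1 : Real.sqrt (x^2+u) ≤ |x| + 1 + u := sqrt_le_lin hu0.le
    rw [Real.norm_eq_abs, abs_of_nonneg (by positivity)]
    have h2 : u^k * Real.exp (-u) * Real.sqrt (x^2+u) ≤ u^k * Real.exp (-u) * (|x|+1+u) := by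
      gcongr
      all_goals first | exact h1 | positivity
    calc u^k * Real.exp (-u) * Real.sqrt (x^2+u) ≤ u^k * Real.exp (-u) * (|x|+1+u) := h2
      _ = u^k * Real.exp (-u) * (|x|+1) + u^(k+1) * Real.exp (-u) := by ring

lemma intD (k : ℕ) {x : ℝ} (hx : 0 < x) :
    IntegrableOn (fun u : ℝ => u ^ k * Real.exp (-u) * (x / Real.sqrt (x^2+u))) (Ioi 0) := by
  apply Integrable.mono' (intPow k)
  · apply ContinuousOn.aestronglyMeasurable ?_ measurableSet_Ioi
    apply ContinuousOn.mul
    · exact ((continuous_pow k).mul (continuous_neg.rexp)).continuousOn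
    · apply ContinuousOn.div continuousOn_const
      · exact (Real.continuous_sqrt.comp (continuous_const.add continuous_id)).continuousOn
      · intro u hu
        have : (0:ℝ) < x^2+u := by have := hu.out; positivity
        exact (Real.sqrt_pos.mpr this).ne'
  · rw [ae_restrict_iff' measurableSet_Ioi]
    filter_upwards with u hu
    have hu0 : (0:ℝ) < u := hu
    have hs : x ≤ Real.sqrt (x^2+u) := Real.le_sqrt_of_sq_le (by linarith)
    have hsp : (0:ℝ) < Real.sqrt (x^2+u) := lt_of_lt_of_le hx hs
    rw [Real.norm_eq_abs, abs_of_nonneg (by positivity)]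
    have : x / Real.sqrt (x^2+u) ≤ 1 := (div_le_one hsp).mpr hs
    calc u^k * Real.exp (-u) * (x / Real.sqrt (x^2+u)) ≤ u^k * Real.exp (-u) * 1 := by
          gcongr
          all_goals first | exact this | positivity
      _ = u^k * Real.exp (-u) := mul_one _

-- derivative of u ↦ exp(-u) * ∑_{m≤k} u^m/m!
lemma hQ (k : ℕ) (u : ℝ) :
    HasDerivAt (fun u : ℝ => Real.exp (-u) * ∑ m ∈ Finset.range (k+1), u^m / (Nat.factorial m : ℝ))
      (-(u^k / (Nat.factorial k : ℝ) * Real.exp (-u))) u := by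
  induction k with
  | zero =>
    simp only [Finset.range_one, Finset.sum_singleton, pow_zero, Nat.factorial_zero,
      Nat.cast_one, div_one, mul_one]
    have h := ((hasDerivAt_id u).neg).exp
    simpa using h
  | succ n ih =>
    have hterm : HasDerivAt (fun u : ℝ => Real.exp (-u) * (u^(n+1) / (Nat.factorial (n+1) : ℝ)))
        (-(Real.exp (-u)) * (u^(n+1) / (Nat.factorial (n+1) : ℝ))
          + Real.exp (-u) * ((n+1) * u^n / (Nat.factorial (n+1) : ℝ))) u := by
      have he : HasDerivAt (fun u : ℝ => Real.exp (-u)) (-(Real.exp (-u))) u := by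
        simpa using ((hasDerivAt_id u).neg).exp
      have hp : HasDerivAt (fun u : ℝ => u^(n+1) / (Nat.factorial (n+1) : ℝ))
          ((n+1) * u^n / (Nat.factorial (n+1) : ℝ)) u := by
        have := (hasDerivAt_pow (n+1) u).div_const (Nat.factorial (n+1) : ℝ)
        simpa [Nat.add_sub_cancel] using this
      exact he.mul hp
    have hsum : HasDerivAt
        (fun u : ℝ => Real.exp (-u) * ∑ m ∈ Finset.range (n+1), u^m / (Nat.factorial m : ℝ)
          + Real.exp (-u) * (u^(n+1) / (Nat.factorial (n+1) : ℝ)))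
        (-(u^n / (Nat.factorial n : ℝ) * Real.exp (-u))
          + (-(Real.exp (-u)) * (u^(n+1) / (Nat.factorial (n+1) : ℝ))
          + Real.exp (-u) * ((n+1) * u^n / (Nat.factorial (n+1) : ℝ)))) u :=
      ih.add hterm
    have hfeq : (fun u : ℝ => Real.exp (-u) * ∑ m ∈ Finset.range (n+2), u^m / (Nat.factorial m : ℝ))
        = (fun u : ℝ => Real.exp (-u) * ∑ m ∈ Finset.range (n+1), u^m / (Nat.factorial m : ℝ)
          + Real.exp (-u) * (u^(n+1) / (Nat.factorial (n+1) : ℝ))) := by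
      funext v
      rw [Finset.sum_range_succ]
      ring
    rw [hfeq]
    convert hsum using 1
    have hfac : (Nat.factorial (n+1) : ℝ) = (n+1) * (Nat.factorial n : ℝ) := by
      push_cast [Nat.factorial_succ]; ring
    have hne : (Nat.factorial n : ℝ) ≠ 0 := Nat.cast_ne_zero.mpr (Nat.factorial_ne_zero n)
    field_simp [hfac]
    rw [hfac]; ring

-- the FTC identity
lemma key (k : ℕ) {x : ℝ} (hx : 0 < x) :
    (2 / (Nat.factorial k : ℝ)) * (∫ u in Ioi (0:ℝ), u^k * Real.exp (-u) * Real.sqrt (x^2+u))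
      - ∑ m ∈ Finset.range (k+1), (1 / (Nat.factorial m : ℝ)) *
          (∫ u in Ioi (0:ℝ), u^m * Real.exp (-u) / Real.sqrt (x^2+u)) = 2 * x := by
  set F : ℝ → ℝ := fun u => -2 * (Real.exp (-u) * ∑ m ∈ Finset.range (k+1),
      u^m / (Nat.factorial m : ℝ)) * Real.sqrt (x^2+u) with hF
  set F' : ℝ → ℝ := fun u => (2 / (Nat.factorial k : ℝ)) * (u^k * Real.exp (-u) * Real.sqrt (x^2+u))
      - ∑ m ∈ Finset.range (k+1), (1 / (Nat.factorial m : ℝ)) *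
          (u^m * Real.exp (-u) / Real.sqrt (x^2+u)) with hF'
  have hsq : ∀ u : ℝ, 0 < u → (0:ℝ) < x^2 + u := fun u hu => by positivity
  -- derivative
  have hderiv : ∀ u ∈ Ioi (0:ℝ), HasDerivAt F (F' u) u := by
    intro u hu
    have hu0 : (0:ℝ) < u := hu
    have hpos := hsq u hu0
    have hsne : Real.sqrt (x^2+u) ≠ 0 := (Real.sqrt_pos.mpr hpos).ne'
    have hs : HasDerivAt (fun u : ℝ => Real.sqrt (x^2+u)) (1/(2*Real.sqrt (x^2+u))) u := by
      have hinner : HasDerivAt (fun u : ℝ => x^2 + u) 1 u := (hasDerivAt_id u).const_add (x^2)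
      have houter := (Real.hasDerivAt_sqrt hpos.ne').comp u hinner
      exact houter.congr_deriv (by ring)
    have hmul := ((hQ k u).const_mul (-2)).mul hs
    refine hmul.congr_deriv ?_
    symm
    have hsq2 : Real.sqrt (x^2+u) * Real.sqrt (x^2+u) = x^2+u := Real.mul_self_sqrt hpos.le
    rw [hF']
    simp only
    have hsum : ∑ m ∈ Finset.range (k+1), (1 / (Nat.factorial m : ℝ)) *
        (u^m * Real.exp (-u) / Real.sqrt (x^2+u))
        = (Real.exp (-u) * ∑ m ∈ Finset.range (k+1), u^m / (Nat.factorial m : ℝ))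
            / Real.sqrt (x^2+u) := by
      rw [Finset.mul_sum, Finset.sum_div]
      exact Finset.sum_congr rfl fun m _ => by ring
    rw [hsum]
    field_simp
    ring_nf
  -- continuity of F
  have hFcont : Continuous F := by
    apply Continuous.mul
    · apply Continuous.mul continuous_const
      exact (continuous_neg.rexp).mul (continuous_finset_sum _ fun m _ =>
        (continuous_pow m).div_const _)
    · exact Real.continuous_sqrt.comp (continuous_const.add continuous_id)
  -- integrability of F'
  have hF'int : IntegrableOn F' (Ioi (0:ℝ)) := by
    apply Integrable.sub
    · exact (intSqrt k x).const_mul _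
    · exact integrable_finset_sum _ fun m _ => (intInv m hx).const_mul _
  -- F tends to 0 at infinity
  have hFtop : Tendsto F atTop (nhds 0) := by
    have hFeq : F = fun u => -2 * ∑ m ∈ Finset.range (k+1),
        (1 / (Nat.factorial m : ℝ)) * (u^m * Real.exp (-u) * Real.sqrt (x^2+u)) := by
      funext u
      rw [hF]
      simp only
      simp only [Finset.mul_sum, mul_assoc, Finset.sum_mul]
      exact Finset.sum_congr rfl fun m _ => by ring
    rw [hFeq]
    have hterm : ∀ m : ℕ, Tendsto (fun u : ℝ => (1 / (Nat.factorial m : ℝ)) *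
        (u^m * Real.exp (-u) * Real.sqrt (x^2+u))) atTop (nhds 0) := by
      intro m
      have haux : Tendsto (fun u : ℝ => (1 / (Nat.factorial m : ℝ)) *
          ((|x|+1) * (u^m * Real.exp (-u)) + u^(m+1) * Real.exp (-u))) atTop (nhds 0) := by
        have h1 := (tendsto_pow_mul_exp_neg_atTop_nhds_zero m).const_mul (|x|+1)
        have h2 := tendsto_pow_mul_exp_neg_atTop_nhds_zero (m+1)
        simpa using (h1.add h2).const_mul (1 / (Nat.factorial m : ℝ))
      apply squeeze_zero' ?_ ?_ haux
      · filter_upwards [eventually_ge_atTop (0:ℝ)] with u hu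
        positivity
      · filter_upwards [eventually_ge_atTop (0:ℝ)] with u hu
        have h1 : Real.sqrt (x^2+u) ≤ |x| + 1 + u := sqrt_le_lin hu
        have h0 : (0:ℝ) ≤ u^m * Real.exp (-u) := by positivity
        have h2 : u^m * Real.exp (-u) * Real.sqrt (x^2+u)
            ≤ u^m * Real.exp (-u) * (|x|+1+u) := by
          gcongr
        have h3 : u^m * Real.exp (-u) * (|x|+1+u)
            = (|x|+1) * (u^m * Real.exp (-u)) + u^(m+1) * Real.exp (-u) := by ring
        have hfacpos : (0:ℝ) < (Nat.factorial m : ℝ) := by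
          exact_mod_cast Nat.factorial_pos m
        rw [h3] at h2
        exact mul_le_mul_of_nonneg_left h2 (by positivity)
    have := tendsto_finset_sum (Finset.range (k+1)) (fun m _ => hterm m)
    simpa using this.const_mul (-2)
  -- apply FTC
  have hFTC := integral_Ioi_of_hasDerivAt_of_tendsto
    (hFcont.continuousWithinAt) hderiv hF'int hFtop
  have hF0 : F 0 = -2 * x := by
    rw [hF]
    simp only
    have hsum0 : ∑ m ∈ Finset.range (k+1), (0:ℝ)^m / (Nat.factorial m : ℝ) = 1 := by
      rw [Finset.sum_eq_single 0]
      · simp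
      · intro m _ hm
        rw [zero_pow hm]
        simp
      · intro h
        exact absurd (Finset.mem_range.mpr (Nat.succ_pos k)) h
    rw [hsum0]
    rw [add_zero, Real.sqrt_sq hx.le]
    simp [Real.exp_zero]
  rw [hF0] at hFTC
  norm_num at hFTC
  -- expand ∫ F'
  have hsplit : ∫ u in Ioi (0:ℝ), F' u
      = (2 / (Nat.factorial k : ℝ)) * (∫ u in Ioi (0:ℝ), u^k * Real.exp (-u) * Real.sqrt (x^2+u))
        - ∑ m ∈ Finset.range (k+1), (1 / (Nat.factorial m : ℝ)) *
            (∫ u in Ioi (0:ℝ), u^m * Real.exp (-u) / Real.sqrt (x^2+u)) := by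
    rw [hF']
    rw [integral_sub ((intSqrt k x).const_mul _)
      (integrable_finset_sum _ fun m _ => (intInv m hx).const_mul _)]
    rw [integral_const_mul, integral_finset_sum _ fun m _ => (intInv m hx).const_mul _]
    congr 1
    exact Finset.sum_congr rfl fun m _ => integral_const_mul _ _
  rw [hsplit] at hFTC
  linarith [hFTC]

-- split lemma
lemma Jsplit (k : ℕ) {x : ℝ} (hx : 0 < x) :
    (∫ u in Ioi (0:ℝ), u^k * Real.exp (-u) * Real.sqrt (x^2+u))
      = (∫ u in Ioi (0:ℝ), u^(k+1) * Real.exp (-u) / Real.sqrt (x^2+u))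
        + x^2 * (∫ u in Ioi (0:ℝ), u^k * Real.exp (-u) / Real.sqrt (x^2+u)) := by
  rw [← integral_const_mul, ← integral_add (intInv (k+1) hx) ((intInv k hx).const_mul (x^2))]
  apply setIntegral_congr_fun measurableSet_Ioi
  intro u hu
  have hu0 : (0:ℝ) < u := hu
  have hpos : (0:ℝ) < x^2+u := by positivity
  have h2 : Real.sqrt (x^2+u) * Real.sqrt (x^2+u) = x^2+u := Real.mul_self_sqrt hpos.le
  have hne : Real.sqrt (x^2+u) ≠ 0 := (Real.sqrt_pos.mpr hpos).ne'
  field_simp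
  linear_combination (u^k) * h2

-- Vav in terms of J
lemma Vav_eq (k : ℕ) {x : ℝ} (hx : 0 < x) :
    Vav (k+1) x = (2 / (((k:ℝ)+1) * (Nat.factorial k : ℝ)))
        * (∫ u in Ioi (0:ℝ), u^k * Real.exp (-u) * Real.sqrt (x^2+u))
      - (2/((k:ℝ)+1)) * x := by
  have hkey := key k hx
  have hfac : (0:ℝ) < (Nat.factorial k : ℝ) := by exact_mod_cast Nat.factorial_pos k
  have hk1 : (0:ℝ) < (k:ℝ)+1 := by positivity
  unfold Vav V
  have hcast : ((k+1 : ℕ) : ℝ) = (k:ℝ)+1 := by push_cast; ring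
  rw [hcast]
  have : ∑ m ∈ Finset.range (k+1), (1 / (Nat.factorial m : ℝ)) *
      (∫ u in Ioi (0:ℝ), u^m * Real.exp (-u) / Real.sqrt (x^2+u))
      = (2 / (Nat.factorial k : ℝ)) * (∫ u in Ioi (0:ℝ), u^k * Real.exp (-u) * Real.sqrt (x^2+u))
        - 2*x := by linarith
  rw [this]
  field_simp

-- Part 1
lemma part1 (k : ℕ) {x : ℝ} (hx : 0 < x) :
    Vav (k+1) x = 2 * V (k+1) x - (2 * x ^ 2 / ((k:ℝ)+1)) * (1 / x - V k x) := by
  rw [Vav_eq k hx, Jsplit k hx]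
  unfold V
  have hfac : (0:ℝ) < (Nat.factorial k : ℝ) := by exact_mod_cast Nat.factorial_pos k
  have hk1 : (0:ℝ) < (k:ℝ)+1 := by positivity
  have hfs : ((Nat.factorial (k+1) : ℕ) : ℝ) = ((k:ℝ)+1) * (Nat.factorial k : ℝ) := by
    push_cast [Nat.factorial_succ]; ring
  rw [hfs]
  field_simp
  ring

-- Convexity of J
lemma Jconv (k : ℕ) :
    ConvexOn ℝ univ (fun x : ℝ => ∫ u in Ioi (0:ℝ), u^k * Real.exp (-u) * Real.sqrt (x^2+u)) := by
  refine ⟨convex_univ, fun x _ y _ a b ha hb hab => ?_⟩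
  simp only [smul_eq_mul]
  calc (∫ u in Ioi (0:ℝ), u^k * Real.exp (-u) * Real.sqrt ((a*x+b*y)^2+u))
      ≤ ∫ u in Ioi (0:ℝ), (a * (u^k * Real.exp (-u) * Real.sqrt (x^2+u))
          + b * (u^k * Real.exp (-u) * Real.sqrt (y^2+u))) := by
        apply setIntegral_mono_on (intSqrt k _)
          (((intSqrt k x).const_mul a).add ((intSqrt k y).const_mul b)) measurableSet_Ioi
        intro u hu
        have hu0 : (0:ℝ) < u := hu
        have h0 : (0:ℝ) ≤ u^k * Real.exp (-u) := by positivity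
        have h1 := sqrt_convex_ineq (u := u) (x := x) (y := y) hu0.le ha hb hab
        calc u^k * Real.exp (-u) * Real.sqrt ((a*x+b*y)^2+u)
            ≤ u^k * Real.exp (-u) * (a * Real.sqrt (x^2+u) + b * Real.sqrt (y^2+u)) :=
              mul_le_mul_of_nonneg_left h1 h0
          _ = a * (u^k * Real.exp (-u) * Real.sqrt (x^2+u))
              + b * (u^k * Real.exp (-u) * Real.sqrt (y^2+u)) := by ring
    _ = a * (∫ u in Ioi (0:ℝ), u^k * Real.exp (-u) * Real.sqrt (x^2+u))
        + b * (∫ u in Ioi (0:ℝ), u^k * Real.exp (-u) * Real.sqrt (y^2+u)) := by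
        rw [integral_add ((intSqrt k x).const_mul a) ((intSqrt k y).const_mul b),
          integral_const_mul, integral_const_mul]

-- Convexity of Vav
lemma part2 (k : ℕ) : ConvexOn ℝ (Ioi (0:ℝ)) (Vav (k+1)) := by
  set c : ℝ := 2 / (((k:ℝ)+1) * (Nat.factorial k : ℝ)) with hc
  have hfac : (0:ℝ) < (Nat.factorial k : ℝ) := by exact_mod_cast Nat.factorial_pos k
  have hc0 : 0 ≤ c := by positivity
  refine ⟨convex_Ioi 0, fun x hx y hy a b ha hb hab => ?_⟩
  have hz : a • x + b • y ∈ Ioi (0:ℝ) := (convex_Ioi (0:ℝ)) hx hy ha hb hab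
  simp only [smul_eq_mul] at hz ⊢
  rw [Vav_eq k hx, Vav_eq k hy, Vav_eq k (show (0:ℝ) < a*x+b*y from hz)]
  have h1 := (Jconv k).2 (mem_univ x) (mem_univ y) ha hb hab
  simp only [smul_eq_mul] at h1
  have h2 := mul_le_mul_of_nonneg_left h1 hc0
  rw [← hc]
  nlinarith [h2]

-- derivative of J
lemma Jder (k : ℕ) {x0 : ℝ} (hx0 : 0 < x0) :
    HasDerivAt (fun x : ℝ => ∫ u in Ioi (0:ℝ), u^k * Real.exp (-u) * Real.sqrt (x^2+u))
      (∫ u in Ioi (0:ℝ), u^k * Real.exp (-u) * (x0 / Real.sqrt (x0^2+u))) x0 := by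
  have hmain := hasDerivAt_integral_of_dominated_loc_of_deriv_le
    (μ := volume.restrict (Ioi (0:ℝ))) (x₀ := x0)
    (F := fun x u => u^k * Real.exp (-u) * Real.sqrt (x^2+u))
    (F' := fun x u => u^k * Real.exp (-u) * (x / Real.sqrt (x^2+u)))
    (bound := fun u => u^k * Real.exp (-u)) (Metric.ball_mem_nhds x0 one_pos)
    (Filter.Eventually.of_forall fun x => Continuous.aestronglyMeasurable
      (((continuous_pow k).mul (continuous_neg.rexp)).mul
        (Real.continuous_sqrt.comp (continuous_const.add continuous_id))))
    (intSqrt k x0)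
    (ContinuousOn.aestronglyMeasurable (by
      apply ContinuousOn.mul
      · exact ((continuous_pow k).mul (continuous_neg.rexp)).continuousOn
      · apply ContinuousOn.div continuousOn_const
        · exact (Real.continuous_sqrt.comp (continuous_const.add continuous_id)).continuousOn
        · intro u hu
          have hu0 : (0:ℝ) < u := hu
          have : (0:ℝ) < x0^2+u := by positivity
          exact (Real.sqrt_pos.mpr this).ne') measurableSet_Ioi)
    (by
      rw [ae_restrict_iff' measurableSet_Ioi]
      filter_upwards with u hu
      intro x _
      have hu0 : (0:ℝ) < u := hu
      have hpos : (0:ℝ) < x^2+u := by positivity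
      have hsp : (0:ℝ) < Real.sqrt (x^2+u) := Real.sqrt_pos.mpr hpos
      have habs : |x| ≤ Real.sqrt (x^2+u) := by
        rw [← Real.sqrt_sq_eq_abs]
        exact Real.sqrt_le_sqrt (by linarith)
      rw [Real.norm_eq_abs, abs_mul, abs_div, abs_of_nonneg (by positivity : (0:ℝ) ≤ u^k * Real.exp (-u)),
        abs_of_nonneg hsp.le]
      have hd : |x| / Real.sqrt (x^2+u) ≤ 1 := (div_le_one hsp).mpr habs
      calc u^k * Real.exp (-u) * (|x| / Real.sqrt (x^2+u)) ≤ u^k * Real.exp (-u) * 1 := by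
            gcongr
            all_goals positivity
        _ = u^k * Real.exp (-u) := mul_one _)
    (intPow k)
    (by
      rw [ae_restrict_iff' measurableSet_Ioi]
      filter_upwards with u hu
      intro x _
      have hu0 : (0:ℝ) < u := hu
      have hpos : (0:ℝ) < x^2+u := by positivity
      have hsne : Real.sqrt (x^2+u) ≠ 0 := (Real.sqrt_pos.mpr hpos).ne'
      have hinner : HasDerivAt (fun x : ℝ => x^2 + u) (2*x) x := by
        simpa using (hasDerivAt_pow 2 x).add_const u
      have houter := (Real.hasDerivAt_sqrt hpos.ne').comp x hinner
      have hs : HasDerivAt (fun x : ℝ => Real.sqrt (x^2+u)) (x / Real.sqrt (x^2+u)) x := by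
        exact houter.congr_deriv (by field_simp)
      simpa [mul_comm] using hs.const_mul (u^k * Real.exp (-u)))
  exact hmain.2

lemma part3 (k : ℕ) :
    Tendsto (fun x => deriv (Vav (k+1)) x) (nhdsWithin (0:ℝ) (Ioi 0))
      (nhds (-2 / (((k:ℕ)+1 : ℕ) : ℝ))) := by
  set c : ℝ := 2 / (((k:ℝ)+1) * (Nat.factorial k : ℝ)) with hc
  set Jf : ℝ → ℝ := fun x => ∫ u in Ioi (0:ℝ), u^k * Real.exp (-u) * Real.sqrt (x^2+u) with hJf
  set Df : ℝ → ℝ := fun x => ∫ u in Ioi (0:ℝ), u^k * Real.exp (-u) * (x / Real.sqrt (x^2+u))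
    with hDf
  have hfac : (0:ℝ) < (Nat.factorial k : ℝ) := by exact_mod_cast Nat.factorial_pos k
  -- deriv formula
  have hderiv : ∀ x : ℝ, 0 < x → deriv (Vav (k+1)) x = c * Df x - 2/((k:ℝ)+1) := by
    intro x hx
    have hEv : Vav (k+1) =ᶠ[nhds x] fun y => c * Jf y - (2/((k:ℝ)+1)) * y := by
      filter_upwards [isOpen_Ioi.mem_nhds (show x ∈ Ioi (0:ℝ) from hx)] with y hy
      exact Vav_eq k hy
    rw [hEv.deriv_eq]
    have hd : HasDerivAt (fun y => c * Jf y - (2/((k:ℝ)+1)) * y)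
        (c * Df x - (2/((k:ℝ)+1)) * 1) x :=
      ((Jder k hx).const_mul c).sub ((hasDerivAt_id x).const_mul _)
    rw [hd.deriv]
    ring
  -- Df tends to 0
  have hDlim : Tendsto Df (nhdsWithin (0:ℝ) (Ioi 0)) (nhds 0) := by
    set C : ℝ := ∫ u in Ioi (0:ℝ), u^k * Real.exp (-u) / Real.sqrt u with hC
    have hg : Tendsto (fun x : ℝ => x * C) (nhdsWithin (0:ℝ) (Ioi 0)) (nhds 0) := by
      have : Tendsto (fun x : ℝ => x * C) (nhdsWithin (0:ℝ) (Ioi 0)) (nhds (0 * C)) :=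
        ((continuous_id.mul continuous_const).tendsto 0).mono_left nhdsWithin_le_nhds
      simpa using this
    apply squeeze_zero' ?_ ?_ hg
    · filter_upwards [self_mem_nhdsWithin] with x hx
      have hx0 : (0:ℝ) < x := hx
      apply setIntegral_nonneg measurableSet_Ioi
      intro u hu
      have hu0 : (0:ℝ) < u := hu
      have : (0:ℝ) < x^2+u := by positivity
      positivity
    · filter_upwards [self_mem_nhdsWithin] with x hx
      have hx0 : (0:ℝ) < x := hx
      have hmono : Df x ≤ ∫ u in Ioi (0:ℝ), x * (u^k * Real.exp (-u) / Real.sqrt u) := by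
        apply setIntegral_mono_on (intD k hx0) ((intPowHalf k).const_mul x) measurableSet_Ioi
        intro u hu
        have hu0 : (0:ℝ) < u := hu
        have hpos : (0:ℝ) < x^2+u := by positivity
        have hsu : (0:ℝ) < Real.sqrt u := Real.sqrt_pos.mpr hu0
        have hle : Real.sqrt u ≤ Real.sqrt (x^2+u) := Real.sqrt_le_sqrt (by nlinarith)
        calc u^k * Real.exp (-u) * (x / Real.sqrt (x^2+u))
            ≤ u^k * Real.exp (-u) * (x / Real.sqrt u) := by
              gcongr
              all_goals positivity
          _ = x * (u^k * Real.exp (-u) / Real.sqrt u) := by ring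
      rw [integral_const_mul] at hmono
      exact hmono
  -- assemble
  have hlim : Tendsto (fun x => c * Df x - 2/((k:ℝ)+1)) (nhdsWithin (0:ℝ) (Ioi 0))
      (nhds (c * 0 - 2/((k:ℝ)+1))) := ((hDlim.const_mul c).sub_const _)
  have hfinal := hlim.congr' (by
    filter_upwards [self_mem_nhdsWithin] with x hx
    exact (hderiv x hx).symm)
  convert hfinal using 2
  push_cast
  ring

theorem Vav_properties (N : ℕ) (hN : 0 < N) :
    (∀ x : ℝ, 0 < x →
      Vav N x = 2 * V N x - (2 * x ^ 2 / (N : ℝ)) * (1 / x - V (N - 1) x)) ∧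
    ConvexOn ℝ (Set.Ioi 0) (Vav N) ∧
    Filter.Tendsto (fun x => deriv (Vav N) x) (nhdsWithin 0 (Set.Ioi 0))
      (nhds (-2 / (N : ℝ))) := by
  obtain ⟨k, rfl⟩ : ∃ k, N = k + 1 := ⟨N - 1, (Nat.succ_pred_eq_of_pos hN).symm⟩
  refine ⟨fun x hx => ?_, part2 k, ?_⟩
  · have h := part1 k hx
    have hc : ((k+1 : ℕ) : ℝ) = (k:ℝ)+1 := by push_cast; ring
    simpa [Nat.add_sub_cancel, hc] using h
  · simpa using part3 k
end
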